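/- For j = 1, …, m let T_j be triangles in ℝ³ (Euclidean space) with vertices x₁ⱼ, x₂ⱼ, x₃ⱼ, affine parameterizations x_j(s,t) = (1−s−t)·x₁ⱼ + s·x₂ⱼ + t·x₃ⱼ over the reference triangle e₀ = {(s,t) : 0 ≤ s, 0 ≤ t, s + t ≤ 1}, centroids c_j = (x₁ⱼ + x₂ⱼ + x₃ⱼ)/3, and |Δ_j| = ‖(x₂ⱼ − x₁ⱼ) × (x₃ⱼ − x₁ⱼ)‖. Let f : ℝ³ → ℝ be twice continuously differentiable on an open set containing ⋃_j T_j, let K ≥ 0 satisfy |f''(y)(v,v)| ≤ K‖v‖² for all y ∈ ⋃_j T_j and v ∈ ℝ³, let h ≥ diameter of every T_j, and let |Γ_p| = Σ_{j=1}^m |Δ_j|/2 be the total area. Then | Σ_{j=1}^m |Δ_j|·∫_{e₀} f(x_j(s,t)) d(s,t) − Σ_{j=1}^m (|Δ_j|/2)·f(c_j) | ≤ (K·h²/4)·|Γ_p|. -/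

import Mathlib

open MeasureTheory

def refTriangle : Set (ℝ × ℝ) := {p | 0 ≤ p.1 ∧ 0 ≤ p.2 ∧ p.1 + p.2 ≤ 1}

lemma refT_meas : MeasurableSet refTriangle := by
  have h1 : MeasurableSet {p : ℝ × ℝ | 0 ≤ p.1} :=
    measurableSet_le measurable_const measurable_fst
  have h2 : MeasurableSet {p : ℝ × ℝ | 0 ≤ p.2} :=
    measurableSet_le measurable_const measurable_snd
  have h3 : MeasurableSet {p : ℝ × ℝ | p.1 + p.2 ≤ 1} :=
    measurableSet_le (measurable_fst.add measurable_snd) measurable_const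
  exact (h1.inter (h2.inter h3))

lemma refT_compact : IsCompact refTriangle := by
  have hsub : refTriangle ⊆ Set.Icc (0, 0) (1, 1) := by
    rintro ⟨s, t⟩ ⟨hs, ht, hst⟩
    constructor <;> constructor <;> simp_all <;> linarith
  have hclosed : IsClosed refTriangle := by
    have h1 : IsClosed {p : ℝ × ℝ | 0 ≤ p.1} := isClosed_le continuous_const continuous_fst
    have h2 : IsClosed {p : ℝ × ℝ | 0 ≤ p.2} := isClosed_le continuous_const continuous_snd
    have h3 : IsClosed {p : ℝ × ℝ | p.1 + p.2 ≤ 1} :=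
      isClosed_le (continuous_fst.add continuous_snd) continuous_const
    exact h1.inter (h2.inter h3)
  exact (isCompact_Icc).of_isClosed_subset hclosed hsub

lemma integral_affine (α β γ : ℝ) :
    ∫ p in refTriangle, (α + β * p.1 + γ * p.2) = α / 2 + β / 6 + γ / 6 := by
  set F : ℝ × ℝ → ℝ := fun p => α + β * p.1 + γ * p.2 with hF
  have hFc : Continuous F := by fun_prop
  have hInt : MeasureTheory.IntegrableOn F refTriangle := by
    exact hFc.continuousOn.integrableOn_compact refT_compact
  have hind : MeasureTheory.Integrable (refTriangle.indicator F) := by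
    rwa [MeasureTheory.integrable_indicator_iff refT_meas]
  have step1 : (∫ p in refTriangle, F p) = ∫ p : ℝ × ℝ, refTriangle.indicator F p := by
    rw [MeasureTheory.integral_indicator refT_meas]
  rw [step1]
  rw [MeasureTheory.Measure.volume_eq_prod] at hind ⊢
  rw [MeasureTheory.integral_prod _ hind]

  have hinner : ∀ s : ℝ, (∫ t : ℝ, refTriangle.indicator F (s, t))
      = Set.indicator (Set.Icc 0 1)
          (fun s => (α + β * s) * (1 - s) + γ * (1 - s) ^ 2 / 2) s := by
    intro s
    by_cases hs : 0 ≤ s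
    · have hfun : (fun t => refTriangle.indicator F (s, t))
          = Set.indicator (Set.Icc 0 (1 - s)) (fun t => α + β * s + γ * t) := by
        funext t
        by_cases ht : t ∈ Set.Icc 0 (1 - s)
        · obtain ⟨ht0, ht1⟩ := ht
          have hm1 : (s, t) ∈ refTriangle := ⟨hs, ht0, by dsimp only; linarith⟩
          have hm2 : t ∈ Set.Icc 0 (1 - s) := ⟨ht0, ht1⟩
          rw [Set.indicator_of_mem hm1, Set.indicator_of_mem hm2]
        · rw [Set.indicator_of_notMem, Set.indicator_of_notMem ht]
          intro hmem
          obtain ⟨_, h2, h3⟩ := hmem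
          exact ht ⟨h2, by linarith⟩
      rw [hfun, MeasureTheory.integral_indicator measurableSet_Icc]
      by_cases hs1 : s ≤ 1
      · have h01 : (0:ℝ) ≤ 1 - s := by linarith
        rw [MeasureTheory.integral_Icc_eq_integral_Ioc,
          ← intervalIntegral.integral_of_le h01]
        have key : ∫ t in (0:ℝ)..(1-s), (α + β * s + γ * t)
            = (α + β * s) * (1 - s) + γ * (1 - s) ^ 2 / 2 := by
          have hd : ∀ t : ℝ, HasDerivAt (fun t : ℝ => (α + β * s) * t + γ * t ^ 2 / 2)
              (α + β * s + γ * t) t := by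
            intro t
            have h2 : HasDerivAt (fun t : ℝ => t ^ 2) (2 * t) t := by
              simpa using hasDerivAt_pow 2 t
            have := ((hasDerivAt_id t).const_mul (α + β * s)).add
              ((h2.const_mul γ).div_const 2)
            exact this.congr_deriv (by ring)
          rw [intervalIntegral.integral_eq_sub_of_hasDerivAt (fun t _ => hd t)
            (by apply Continuous.intervalIntegrable; fun_prop)]
          ring
        have hm : s ∈ Set.Icc (0:ℝ) 1 := ⟨hs, hs1⟩
        rw [key, Set.indicator_of_mem hm]
      · have : Set.Icc (0:ℝ) (1 - s) = ∅ := Set.Icc_eq_empty (by intro hc; simp at hc; linarith)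
        rw [this, Set.indicator_of_notMem (by simp; intro h0c; linarith)]
        simp
    · have hfun : (fun t => refTriangle.indicator F (s, t)) = fun _ => (0:ℝ) := by
        funext t
        rw [Set.indicator_of_notMem]
        intro hmem; exact hs hmem.1
      rw [hfun, Set.indicator_of_notMem (by simp; intro h0c; linarith)]
      simp
  simp only [hinner]
  rw [MeasureTheory.integral_indicator measurableSet_Icc,
    MeasureTheory.integral_Icc_eq_integral_Ioc,
    ← intervalIntegral.integral_of_le (by norm_num : (0:ℝ) ≤ 1)]
  have hd : ∀ x : ℝ, HasDerivAt
      (fun x : ℝ => (α + γ/2) * x + (β - α - γ) * x ^ 2 / 2 + (γ/2 - β) * x ^ 3 / 3)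
      ((α + β * x) * (1 - x) + γ * (1 - x) ^ 2 / 2) x := by
    intro x
    have h2 : HasDerivAt (fun x : ℝ => x ^ 2) (2 * x) x := by simpa using hasDerivAt_pow 2 x
    have h3 : HasDerivAt (fun x : ℝ => x ^ 3) (3 * x ^ 2) x := by simpa using hasDerivAt_pow 3 x
    have := (((hasDerivAt_id x).const_mul (α + γ/2)).add
      ((h2.const_mul (β - α - γ)).div_const 2)).add ((h3.const_mul (γ/2 - β)).div_const 3)
    exact this.congr_deriv (by ring)
  rw [intervalIntegral.integral_eq_sub_of_hasDerivAt (fun x _ => hd x)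
    (by apply Continuous.intervalIntegrable; fun_prop)]
  ring


variable {E : Type*} [NormedAddCommGroup E] [NormedSpace ℝ E]

lemma abs_coef {p q : ℝ} (hp : 0 ≤ p) (hq : 0 ≤ q) (hpq : p + q ≤ 2/3) :
    |p - 1/3| + |q - 1/3| ≤ 2/3 := by
  rcases abs_cases (p - 1/3) with ⟨h1, h2⟩ | ⟨h1, h2⟩ <;>
    rcases abs_cases (q - 1/3) with ⟨h3, h4⟩ | ⟨h3, h4⟩ <;> linarith

lemma two_smul_bd {p q h : ℝ} {v w : E} (hv : ‖v‖ ≤ h) (hw : ‖w‖ ≤ h)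
    (hp : 0 ≤ p) (hq : 0 ≤ q) (hpq : p + q ≤ 2/3) :
    ‖(p - 1/3) • v + (q - 1/3) • w‖ ≤ 2/3 * h := by
  have h0 : 0 ≤ h := le_trans (norm_nonneg v) hv
  have habs := abs_coef hp hq hpq
  calc ‖(p - 1/3) • v + (q - 1/3) • w‖ ≤ ‖(p - 1/3) • v‖ + ‖(q - 1/3) • w‖ := norm_add_le _ _
    _ = |p - 1/3| * ‖v‖ + |q - 1/3| * ‖w‖ := by simp [norm_smul, Real.norm_eq_abs]
    _ ≤ |p - 1/3| * h + |q - 1/3| * h := by gcongr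
    _ ≤ 2/3 * h := by nlinarith [abs_nonneg (p - 1/3), abs_nonneg (q - 1/3)]

lemma centroid_dist {A B C : E} {h : ℝ} (hBA : ‖B - A‖ ≤ h) (hCA : ‖C - A‖ ≤ h)
    (hCB : ‖C - B‖ ≤ h) {s t : ℝ} (hs : 0 ≤ s) (ht : 0 ≤ t) (hst : s + t ≤ 1) :
    ‖(1 - s - t) • A + s • B + t • C - ((1:ℝ)/3) • (A + B + C)‖ ≤ 2/3 * h := by
  have hAB : ‖A - B‖ ≤ h := by rwa [norm_sub_rev]
  have hAC : ‖A - C‖ ≤ h := by rwa [norm_sub_rev]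
  have hBC : ‖B - C‖ ≤ h := by rwa [norm_sub_rev]
  by_cases h1 : s + t ≤ 2/3
  · have hid : (1 - s - t) • A + s • B + t • C - ((1:ℝ)/3) • (A + B + C)
        = (s - 1/3) • (B - A) + (t - 1/3) • (C - A) := by module
    rw [hid]; exact two_smul_bd hBA hCA hs ht h1
  · by_cases h2 : 1/3 ≤ s
    · have hid : (1 - s - t) • A + s • B + t • C - ((1:ℝ)/3) • (A + B + C)
          = ((1 - s - t) - 1/3) • (A - B) + (t - 1/3) • (C - B) := by module
      rw [hid]
      exact two_smul_bd hAB hCB (by linarith) ht (by linarith)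
    · have hid : (1 - s - t) • A + s • B + t • C - ((1:ℝ)/3) • (A + B + C)
          = ((1 - s - t) - 1/3) • (A - C) + (s - 1/3) • (B - C) := by module
      rw [hid]
      exact two_smul_bd hAC hBC (by linarith) hs (by linarith)

lemma combo_mem {S : Set E} (hS : Convex ℝ S) {A B C : E} (hA : A ∈ S) (hB : B ∈ S)
    (hC : C ∈ S) {s t : ℝ} (hs : 0 ≤ s) (ht : 0 ≤ t) (hst : s + t ≤ 1) :
    (1 - s - t) • A + s • B + t • C ∈ S := by
  by_cases hσ : s + t = 0
  · have hs0 : s = 0 := by linarith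
    have ht0 : t = 0 := by linarith
    simp [hs0, ht0, hA]
  · have hσpos : 0 < s + t := lt_of_le_of_ne (by linarith) (Ne.symm hσ)
    set σ := s + t with hσdef
    have hw : (s / σ) • B + (t / σ) • C ∈ S :=
      hS hB hC (div_nonneg hs hσpos.le) (div_nonneg ht hσpos.le) (by field_simp; exact hσdef.symm)
    have hmem := hS hA hw (a := 1 - σ) (b := σ) (by linarith) hσpos.le (by ring)
    have hident : (1 - σ) • A + σ • ((s / σ) • B + (t / σ) • C)
        = (1 - s - t) • A + s • B + t • C := by
      rw [smul_add, smul_smul, smul_smul,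
        mul_div_cancel₀ _ (ne_of_gt hσpos), mul_div_cancel₀ _ (ne_of_gt hσpos)]
      module
    rwa [hident] at hmem



variable {E : Type*} [NormedAddCommGroup E] [InnerProductSpace ℝ E]

lemma taylor_bd (f : E → ℝ) (U : Set E) (hU : IsOpen U) (hf : ContDiffOn ℝ 2 f U)
    (x₀ y : E) (hseg : segment ℝ x₀ y ⊆ U) (M : ℝ)
    (hM : ∀ z ∈ segment ℝ x₀ y, |iteratedFDeriv ℝ 2 f z ![y - x₀, y - x₀]| ≤ M) :
    |f y - f x₀ - fderiv ℝ f x₀ (y - x₀)| ≤ M / 2 := by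
  set v := y - x₀ with hv
  set line : ℝ → E := fun u => x₀ + u • v with hline
  have hmemseg : ∀ u ∈ Set.Icc (0:ℝ) 1, line u ∈ segment ℝ x₀ y := by
    intro u hu
    rw [segment_eq_image' ℝ x₀ y]
    exact ⟨u, hu, rfl⟩
  have hmemU : ∀ u ∈ Set.Icc (0:ℝ) 1, line u ∈ U := fun u hu => hseg (hmemseg u hu)
  have hlineD : ∀ u : ℝ, HasDerivAt line v u := by
    intro u
    have : HasDerivAt (fun u : ℝ => u • v) v u := by
      simpa using (hasDerivAt_id u).smul_const v
    exact this.const_add x₀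
  have hf1 : ContDiffOn ℝ 1 (fderiv ℝ f) U := hf.fderiv_of_isOpen hU (by norm_num)
  have hfdiff : ∀ z ∈ U, DifferentiableAt ℝ f z := fun z hz =>
    ((hf.differentiableOn (by norm_num)) z hz).differentiableAt (hU.mem_nhds hz)
  have hfdiff2 : ∀ z ∈ U, DifferentiableAt ℝ (fderiv ℝ f) z := fun z hz =>
    ((hf1.differentiableOn (by norm_num)) z hz).differentiableAt (hU.mem_nhds hz)
  set φ' : ℝ → ℝ := fun u => fderiv ℝ f (line u) v with hφ'def
  have hφ : ∀ u ∈ Set.Icc (0:ℝ) 1, HasDerivAt (fun u => f (line u)) (φ' u) u := by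
    intro u hu
    exact ((hfdiff _ (hmemU u hu)).hasFDerivAt).comp_hasDerivAt u (hlineD u)
  have hφ'' : ∀ u ∈ Set.Icc (0:ℝ) 1,
      HasDerivAt φ' (iteratedFDeriv ℝ 2 f (line u) ![v, v]) u := by
    intro u hu
    have hc : HasDerivAt (fun u => fderiv ℝ f (line u))
        (fderiv ℝ (fderiv ℝ f) (line u) v) u :=
      ((hfdiff2 _ (hmemU u hu)).hasFDerivAt).comp_hasDerivAt u (hlineD u)
    have := hc.clm_apply (hasDerivAt_const u v)
    simp only [map_zero, add_zero] at this
    have hrw : iteratedFDeriv ℝ 2 f (line u) ![v, v]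
        = fderiv ℝ (fderiv ℝ f) (line u) v v := by
      rw [iteratedFDeriv_two_apply]; simp
    rw [hrw]
    simpa using this
  have hM0 : 0 ≤ M := le_trans (abs_nonneg _) (hM x₀ (left_mem_segment ℝ x₀ y))
  have hbd : ∀ u ∈ Set.Icc (0:ℝ) 1, ‖φ' u - φ' 0‖ ≤ M * u := by
    intro u hu
    have := (convex_Icc (0:ℝ) 1).norm_image_sub_le_of_norm_hasDerivWithin_le
      (f := φ') (f' := fun u => iteratedFDeriv ℝ 2 f (line u) ![v, v])
      (fun x hx => (hφ'' x hx).hasDerivWithinAt)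
      (fun x hx => by
        rw [Real.norm_eq_abs]; exact hM _ (hmemseg x hx))
      (Set.left_mem_Icc.2 zero_le_one) hu
    simp only [Real.norm_eq_abs, sub_zero] at this ⊢
    rwa [abs_of_nonneg hu.1] at this
  -- continuity of φ'
  have hφ'cont : ContinuousOn φ' (Set.Icc 0 1) := by
    have hlc : Continuous line := by fun_prop
    have : ContinuousOn (fderiv ℝ f) U := hf1.continuousOn
    have hcomp : ContinuousOn (fun u => fderiv ℝ f (line u)) (Set.Icc 0 1) :=
      this.comp hlc.continuousOn hmemU
    exact (ContinuousLinearMap.apply ℝ ℝ v).continuous.comp_continuousOn hcomp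
  have hInt : IntervalIntegrable φ' volume 0 1 := by
    apply ContinuousOn.intervalIntegrable
    rwa [Set.uIcc_of_le (by norm_num : (0:ℝ) ≤ 1)]
  have hFTC : (∫ u in (0:ℝ)..1, φ' u) = f (line 1) - f (line 0) := by
    exact intervalIntegral.integral_eq_sub_of_hasDerivAt (f := fun u => f (line u))
      (fun u hu => hφ u (by rwa [Set.uIcc_of_le (by norm_num : (0:ℝ) ≤ 1)] at hu)) hInt
  have hline0 : line 0 = x₀ := by simp [hline]
  have hline1 : line 1 = y := by simp [hline, hv]
  have hsplit : f y - f x₀ - fderiv ℝ f x₀ v = ∫ u in (0:ℝ)..1, (φ' u - φ' 0) := by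
    rw [intervalIntegral.integral_sub hInt intervalIntegrable_const,
      hFTC, hline0, hline1]
    simp [hφ'def, hline0]
  rw [hsplit, ← Real.norm_eq_abs]
  have hle : ‖∫ u in (0:ℝ)..1, (φ' u - φ' 0)‖ ≤ |∫ u in (0:ℝ)..1, M * u| := by
    apply intervalIntegral.norm_integral_le_abs_of_norm_le
    · filter_upwards [MeasureTheory.ae_restrict_mem measurableSet_Ioc] with t ht
      rw [Set.uIoc_of_le (by norm_num : (0:ℝ) ≤ 1)] at ht
      exact hbd t ⟨le_of_lt ht.1, ht.2⟩
    · apply Continuous.intervalIntegrable; fun_prop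
  have hval : (∫ u in (0:ℝ)..1, M * u) = M / 2 := by
    rw [intervalIntegral.integral_const_mul]
    simp [integral_id]
    ring
  calc ‖∫ u in (0:ℝ)..1, (φ' u - φ' 0)‖ ≤ |∫ u in (0:ℝ)..1, M * u| := hle
    _ = M / 2 := by rw [hval, abs_of_nonneg (by linarith)]

lemma tri_bound (f : E → ℝ) (U : Set E) (hU : IsOpen U) (hf : ContDiffOn ℝ 2 f U)
    (A B C : E) (hsub : convexHull ℝ {A, B, C} ⊆ U) (K h : ℝ) (hK : 0 ≤ K)
    (hK2 : ∀ y ∈ convexHull ℝ {A, B, C}, ∀ v : E,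
      |iteratedFDeriv ℝ 2 f y ![v, v]| ≤ K * ‖v‖ ^ 2)
    (hh : Metric.diam (convexHull ℝ ({A, B, C} : Set E)) ≤ h) :
    |(∫ p in refTriangle, f ((1 - p.1 - p.2) • A + p.1 • B + p.2 • C))
      - (1/2) * f (((1:ℝ)/3) • (A + B + C))| ≤ K * h ^ 2 / 8 := by
  set T : Set E := convexHull ℝ {A, B, C} with hTdef
  have hconv : Convex ℝ T := convex_convexHull ℝ _
  have hAT : A ∈ T := subset_convexHull ℝ _ (by simp)
  have hBT : B ∈ T := subset_convexHull ℝ _ (by simp)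
  have hCT : C ∈ T := subset_convexHull ℝ _ (by simp)
  set cen : E := ((1:ℝ)/3) • (A + B + C) with hcendef
  have hcenT : cen ∈ T := by
    have := combo_mem hconv hAT hBT hCT (s := 1/3) (t := 1/3)
      (by norm_num) (by norm_num) (by norm_num)
    have hid : (1 - 1/3 - 1/3 : ℝ) • A + (1/3 : ℝ) • B + (1/3 : ℝ) • C = cen := by
      rw [hcendef]; module
    rwa [hid] at this
  have hTbdd : Bornology.IsBounded T :=
    ((Set.toFinite ({A, B, C} : Set E)).isCompact_convexHull ℝ).isBounded
  have hedge : ∀ x ∈ T, ∀ y ∈ T, ‖x - y‖ ≤ h := by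
    intro x hx y hy
    rw [← dist_eq_norm]
    exact le_trans (Metric.dist_le_diam_of_mem hTbdd hx hy) hh
  have hBA : ‖B - A‖ ≤ h := hedge _ hBT _ hAT
  have hCA : ‖C - A‖ ≤ h := hedge _ hCT _ hAT
  have hCB : ‖C - B‖ ≤ h := hedge _ hCT _ hBT
  have hh0 : 0 ≤ h := le_trans (norm_nonneg _) hBA
  set x : ℝ × ℝ → E := fun p => (1 - p.1 - p.2) • A + p.1 • B + p.2 • C with hxdef
  have hxT : ∀ p ∈ refTriangle, x p ∈ T := fun p hp =>
    combo_mem hconv hAT hBT hCT hp.1 hp.2.1 hp.2.2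
  set D : E →L[ℝ] ℝ := fderiv ℝ f cen with hDdef
  -- pointwise Taylor bound
  have hg : ∀ p ∈ refTriangle,
      |f (x p) - f cen - D (x p - cen)| ≤ 2 * K * h ^ 2 / 9 := by
    intro p hp
    have hseg : segment ℝ cen (x p) ⊆ U :=
      subset_trans (hconv.segment_subset hcenT (hxT p hp)) hsub
    have hdist : ‖x p - cen‖ ≤ 2/3 * h := centroid_dist hBA hCA hCB hp.1 hp.2.1 hp.2.2
    have hM : ∀ z ∈ segment ℝ cen (x p),
        |iteratedFDeriv ℝ 2 f z ![x p - cen, x p - cen]| ≤ K * (2/3 * h) ^ 2 := by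
      intro z hz
      refine le_trans (hK2 z (hconv.segment_subset hcenT (hxT p hp) hz) _) ?_
      have hsq : ‖x p - cen‖ ^ 2 ≤ (2/3 * h) ^ 2 :=
        pow_le_pow_left₀ (norm_nonneg _) hdist 2
      exact mul_le_mul_of_nonneg_left hsq hK
    have := taylor_bd f U hU hf cen (x p) hseg _ hM
    calc |f (x p) - f cen - D (x p - cen)| ≤ K * (2/3 * h) ^ 2 / 2 := this
      _ = 2 * K * h ^ 2 / 9 := by ring
  -- integrability
  have hfc : ContinuousOn f U := hf.continuousOn
  have hxc : Continuous x := by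
    rw [hxdef]; fun_prop
  have hfx_int : IntegrableOn (fun p => f (x p)) refTriangle := by
    apply ContinuousOn.integrableOn_compact refT_compact
    exact hfc.comp hxc.continuousOn (fun p hp => hsub (hxT p hp))
  set α : ℝ := f cen + (2/3) * D A - (1/3) * D B - (1/3) * D C with hαdef
  set β : ℝ := D B - D A with hβdef
  set γ : ℝ := D C - D A with hγdef
  have haff : ∀ p : ℝ × ℝ, f cen + D (x p - cen) = α + β * p.1 + γ * p.2 := by
    intro p
    have hxe : x p - cen = (2/3 - p.1 - p.2) • A + (p.1 - 1/3) • B + (p.2 - 1/3) • C := by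
      simp only [hxdef, hcendef]; module
    rw [hxe]
    simp only [map_add, ContinuousLinearMap.map_smul, smul_eq_mul, hαdef, hβdef, hγdef]
    ring
  have haff_int : IntegrableOn (fun p : ℝ × ℝ => α + β * p.1 + γ * p.2) refTriangle := by
    apply ContinuousOn.integrableOn_compact refT_compact
    fun_prop
  have haffval : (∫ p in refTriangle, (α + β * p.1 + γ * p.2)) = (1/2) * f cen := by
    rw [integral_affine, hαdef, hβdef, hγdef]; ring
  have hsplit : (∫ p in refTriangle, f (x p)) - (1/2) * f cen
      = ∫ p in refTriangle, (f (x p) - (f cen + D (x p - cen))) := by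
    have heq : ∀ p : ℝ × ℝ, f (x p) - (f cen + D (x p - cen))
        = f (x p) - (α + β * p.1 + γ * p.2) := fun p => by rw [haff p]
    simp_rw [heq]
    rw [integral_sub hfx_int haff_int, haffval]
  have hvol_lt : volume refTriangle < ⊤ := refT_compact.measure_lt_top
  have hvol : (volume refTriangle).toReal = 1/2 := by
    have h1 := integral_affine 1 0 0
    simp only [zero_mul, add_zero] at h1
    rw [setIntegral_const, smul_eq_mul, mul_one, measureReal_def] at h1
    linarith
  have hbound : ‖∫ p in refTriangle, (f (x p) - (f cen + D (x p - cen)))‖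
      ≤ (2 * K * h ^ 2 / 9) * (volume refTriangle).toReal := by
    apply norm_setIntegral_le_of_norm_le_const hvol_lt
    intro p hp
    rw [Real.norm_eq_abs]
    have := hg p hp
    calc |f (x p) - (f cen + D (x p - cen))| = |f (x p) - f cen - D (x p - cen)| := by
          ring_nf
      _ ≤ 2 * K * h ^ 2 / 9 := hg p hp
  have hgoal : |(∫ p in refTriangle, f (x p)) - (1/2) * f cen| ≤ K * h ^ 2 / 8 := by
    rw [hsplit, ← Real.norm_eq_abs]
    refine le_trans hbound ?_
    rw [hvol]
    nlinarith [sq_nonneg h]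
  exact hgoal


noncomputable def cross3 (a b : EuclideanSpace ℝ (Fin 3)) : EuclideanSpace ℝ (Fin 3) :=
  (EuclideanSpace.equiv (Fin 3) ℝ).symm
    (crossProduct ((EuclideanSpace.equiv (Fin 3) ℝ) a) ((EuclideanSpace.equiv (Fin 3) ℝ) b))

/-- Lemma 6 of the paper, three-dimensional case: composite centroid quadrature over a
triangulated surface `Γ_p = ⋃ⱼ Tⱼ`, where the `j`-th triangle has vertices
`a j, b j, c j`, centroid `(a j + b j + c j)/3` and `|Δⱼ| = ‖(b j − a j) × (c j − a j)‖`.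
If the diameter of every triangle is at most `h`, the quadrature error is bounded by
`(K h²/4) |Γ_p|`, with `|Γ_p| = Σⱼ |Δⱼ|/2` the total area. -/
theorem composite_centroid_rule_triangulated_surface
    (m : ℕ) (a b c : ℕ → EuclideanSpace ℝ (Fin 3))
    (T : ℕ → Set (EuclideanSpace ℝ (Fin 3)))
    (hT : ∀ j, T j = convexHull ℝ {a j, b j, c j})
    (f : EuclideanSpace ℝ (Fin 3) → ℝ)
    (U : Set (EuclideanSpace ℝ (Fin 3))) (hU : IsOpen U)
    (hTU : (⋃ j ∈ Finset.range m, T j) ⊆ U)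
    (hf : ContDiffOn ℝ 2 f U)
    (K : ℝ) (hK : 0 ≤ K)
    (hK2 : ∀ y ∈ ⋃ j ∈ Finset.range m, T j, ∀ v : EuclideanSpace ℝ (Fin 3),
      |iteratedFDeriv ℝ 2 f y ![v, v]| ≤ K * ‖v‖ ^ 2)
    (h : ℝ) (hh : ∀ j ∈ Finset.range m, Metric.diam (T j) ≤ h) :
    |(∑ j ∈ Finset.range m, ‖cross3 (b j - a j) (c j - a j)‖ *
        (∫ p in refTriangle, f ((1 - p.1 - p.2) • a j + p.1 • b j + p.2 • c j))) -
      ∑ j ∈ Finset.range m, (‖cross3 (b j - a j) (c j - a j)‖ / 2) *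
        f (((1:ℝ)/3) • (a j + b j + c j))|
      ≤ (K * h ^ 2 / 4) *
        (∑ j ∈ Finset.range m, ‖cross3 (b j - a j) (c j - a j)‖ / 2) := by
  have key : ∀ j ∈ Finset.range m,
      |(∫ p in refTriangle, f ((1 - p.1 - p.2) • a j + p.1 • b j + p.2 • c j))
        - (1/2) * f (((1:ℝ)/3) • (a j + b j + c j))| ≤ K * h ^ 2 / 8 := by
    intro j hj
    have hmem : ∀ y ∈ convexHull ℝ ({a j, b j, c j} : Set (EuclideanSpace ℝ (Fin 3))),
        y ∈ ⋃ i ∈ Finset.range m, T i := by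
      intro y hy
      exact Set.mem_biUnion hj (by rw [hT j]; exact hy)
    have hsubj : convexHull ℝ ({a j, b j, c j} : Set (EuclideanSpace ℝ (Fin 3))) ⊆ U :=
      fun y hy => hTU (hmem y hy)
    apply tri_bound f U hU hf _ _ _ hsubj K h hK
    · intro y hy v
      exact hK2 y (hmem y hy) v
    · rw [← hT j]; exact hh j hj
  rw [← Finset.sum_sub_distrib]
  refine le_trans (Finset.abs_sum_le_sum_abs _ _) ?_
  have hterm : ∀ j ∈ Finset.range m,
      |‖cross3 (b j - a j) (c j - a j)‖ *
          (∫ p in refTriangle, f ((1 - p.1 - p.2) • a j + p.1 • b j + p.2 • c j)) -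
        (‖cross3 (b j - a j) (c j - a j)‖ / 2) * f (((1:ℝ)/3) • (a j + b j + c j))|
        ≤ ‖cross3 (b j - a j) (c j - a j)‖ * (K * h ^ 2 / 8) := by
    intro j hj
    have hw0 : (0:ℝ) ≤ ‖cross3 (b j - a j) (c j - a j)‖ := norm_nonneg _
    have heq : ‖cross3 (b j - a j) (c j - a j)‖ *
          (∫ p in refTriangle, f ((1 - p.1 - p.2) • a j + p.1 • b j + p.2 • c j)) -
        (‖cross3 (b j - a j) (c j - a j)‖ / 2) * f (((1:ℝ)/3) • (a j + b j + c j))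
        = ‖cross3 (b j - a j) (c j - a j)‖ *
          ((∫ p in refTriangle, f ((1 - p.1 - p.2) • a j + p.1 • b j + p.2 • c j))
            - (1/2) * f (((1:ℝ)/3) • (a j + b j + c j))) := by ring
    rw [heq, abs_mul, abs_of_nonneg hw0]
    exact mul_le_mul_of_nonneg_left (key j hj) hw0
  refine le_trans (Finset.sum_le_sum hterm) ?_
  rw [Finset.mul_sum]
  refine le_of_eq (Finset.sum_congr rfl ?_)
  intro j _
  ring
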